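/- Let R be a finite (not necessarily unital) ring with |Cent(R)| = 4. Then at least one of the centralizers of a non-central element of R has additive index 2 in R, i.e., there exists r ∈ R \ Z(R) with |R : C(r)| = 2. -/

import Mathlib

/-- The centralizer of `r` in a (not necessarily unital) ring: `{s | r*s = s*r}`. -/
def rCentralizer {R : Type*} [NonUnitalRing R] (r : R) : Set R := {s | r * s = s * r}

/-- The set of all centralizers of elements of `R`. -/
def Cent (R : Type*) [NonUnitalRing R] : Set (Set R) :=
  Set.range (fun r : R => rCentralizer r)

/-- The center of a (not necessarily unital) ring, as a set. -/
def rCenter (R : Type*) [NonUnitalRing R] : Set R := {s | ∀ r : R, r * s = s * r}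

/-- The centralizer of `r`, as an additive subgroup. -/
def centralizerAddSubgroup {R : Type*} [NonUnitalRing R] (r : R) : AddSubgroup R where
  carrier := {s | r * s = s * r}
  zero_mem' := by rw [Set.mem_setOf_eq, mul_zero, zero_mul]
  add_mem' := by intro a b ha hb; simp only [Set.mem_setOf_eq] at *; rw [mul_add, add_mul, ha, hb]
  neg_mem' := by intro a ha; simp only [Set.mem_setOf_eq] at *; rw [mul_neg, neg_mul, ha]


/-- No group is the union of two proper subgroups. -/
lemma exists_not_mem_pair {G : Type*} [AddCommGroup G] {H K : AddSubgroup G}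
    (hH : H ≠ ⊤) (hK : K ≠ ⊤) : ∃ x : G, x ∉ H ∧ x ∉ K := by
  have hu : ∃ u : G, u ∉ H := by
    by_contra hc; push_neg at hc; exact hH ((AddSubgroup.eq_top_iff' _).mpr hc)
  have hv : ∃ v : G, v ∉ K := by
    by_contra hc; push_neg at hc; exact hK ((AddSubgroup.eq_top_iff' _).mpr hc)
  obtain ⟨u, hu⟩ := hu
  obtain ⟨v, hv⟩ := hv
  by_cases huK : u ∈ K
  · by_cases hvH : v ∈ H
    · refine ⟨u + v, fun h => ?_, fun h => ?_⟩
      · exact hu (by simpa using H.sub_mem h hvH)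
      · exact hv (by simpa using K.sub_mem h huK)
    · exact ⟨v, hvH, hv⟩
  · exact ⟨u, hu, huK⟩

/-- Scorza: if an abelian group is covered by three proper subgroups, the first has index 2. -/
lemma index_eq_two_of_cover {G : Type*} [AddCommGroup G] {A B C : AddSubgroup G}
    (hA : A ≠ ⊤) (hB : B ≠ ⊤) (hC : C ≠ ⊤)
    (cov : ∀ x : G, x ∈ A ∨ x ∈ B ∨ x ∈ C) : A.index = 2 := by
  obtain ⟨a, haB, haC⟩ := exists_not_mem_pair hB hC
  have haA : a ∈ A := (cov a).resolve_right (by tauto)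
  obtain ⟨b, hbA, hbC⟩ := exists_not_mem_pair hA hC
  have hbB : b ∈ B := by rcases cov b with h | h | h <;> tauto
  obtain ⟨c, hcA, hcB⟩ := exists_not_mem_pair hA hB
  have hcC : c ∈ C := by rcases cov c with h | h | h <;> tauto
  -- b + c ∈ A
  have hbc : b + c ∈ A := by
    rcases cov (b + c) with h | h | h
    · exact h
    · exact absurd (by simpa using B.sub_mem h hbB) hcB
    · exact absurd (by simpa using C.sub_mem h hcC) hbC
  -- b + b ∈ A
  have h2b : b + b ∈ A := by
    by_contra h2
    by_cases h2C : b + b ∈ C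
    · rcases cov (a + (b + b)) with h | h | h
      · exact h2 (by simpa using A.sub_mem h haA)
      · exact haB (by simpa using B.sub_mem h (B.add_mem hbB hbB))
      · exact haC (by simpa using C.sub_mem h h2C)
    · rcases cov ((b + b) + c) with h | h | h
      · have : b ∈ A := by
          have := A.sub_mem h hbc
          simpa [add_sub_add_comm, add_sub_cancel_right] using this
        exact hbA this
      · exact hcB (by simpa using B.sub_mem h (B.add_mem hbB hbB))
      · exact h2C (by simpa using C.sub_mem h hcC)
  -- key: anything outside A lands in A after adding b
  have key : ∀ x : G, x ∉ A → x + b ∈ A := by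
    intro x hxA
    by_cases hxB : x ∈ B
    · by_cases hxC : x ∈ C
      · -- x ∈ B ∩ C
        by_cases ht : x + b ∈ A
        · exact ht
        · have htC : x + b ∉ C := fun h => hbC (by simpa using C.sub_mem h hxC)
          have htcA : (x + b) + c ∈ A := by
            rcases cov ((x + b) + c) with h | h | h
            · exact h
            · exact absurd (by simpa using B.sub_mem h (B.add_mem hxB hbB)) hcB
            · exact absurd (by simpa using C.sub_mem h hcC) htC
          have : x ∈ A := by
            have := A.sub_mem htcA hbc
            simpa [add_sub_add_comm, add_sub_cancel_right] using this
          exact absurd this hxA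
      · -- x ∈ B \ C : x + c ∈ A
        have hxc : x + c ∈ A := by
          rcases cov (x + c) with h | h | h
          · exact h
          · exact absurd (by simpa using B.sub_mem h hxB) hcB
          · exact absurd (by simpa using C.sub_mem h hcC) hxC
        have hrw : x + b = (x + c) + (b + b) - (b + c) := by abel
        rw [hrw]
        exact A.sub_mem (A.add_mem hxc h2b) hbc
    · -- x ∈ C \ B (x ∉ B)
      have hxC : x ∈ C := by rcases cov x with h | h | h <;> tauto
      rcases cov (x + b) with h | h | h
      · exact h
      · exact absurd (by simpa using B.sub_mem h hbB) hxB
      · exact absurd (by simpa using C.sub_mem h hxC) hbC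
  rw [AddSubgroup.index_eq_two_iff]
  refine ⟨b, fun x => ?_⟩
  by_cases hx : x ∈ A
  · exact Or.inr ⟨hx, fun h => hbA (by simpa using A.sub_mem h hx)⟩
  · exact Or.inl ⟨key x hx, hx⟩

/-- In a finite `4`-centralizer ring, some centralizer of a non-central element has
additive index `2`. -/
theorem exists_index_two_centralizer (R : Type*) [NonUnitalRing R] [Finite R]
    (h : (Cent R).ncard = 4) :
    ∃ r : R, r ∉ rCenter R ∧ (centralizerAddSubgroup r).index = 2 := by
  have huniv : (Set.univ : Set R) ∈ Cent R := ⟨0, by ext s; simp [rCentralizer]⟩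
  have hT : ((Cent R) \ {Set.univ}).ncard = 3 := by
    rw [Set.ncard_diff_singleton_of_mem huniv, h]
  obtain ⟨X, Y, Z, hXY, hXZ, hYZ, hTe⟩ := Set.ncard_eq_three.mp hT
  have hmem : ∀ W ∈ ({X, Y, Z} : Set (Set R)),
      ∃ r : R, r ∉ rCenter R ∧ rCentralizer r = W := by
    intro W hW
    rw [← hTe] at hW
    obtain ⟨⟨r, hr⟩, hWu⟩ := hW
    refine ⟨r, fun hc => ?_, hr⟩
    apply hWu
    rw [Set.mem_singleton_iff, ← hr]
    ext s
    simp only [rCentralizer, Set.mem_setOf_eq, Set.mem_univ, iff_true]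
    exact (hc s).symm
  obtain ⟨x, hxZ, hxC⟩ := hmem X (by simp)
  obtain ⟨y, hyZ, hyC⟩ := hmem Y (by simp)
  obtain ⟨z, hzZ, hzC⟩ := hmem Z (by simp)
  have cov : ∀ s : R, s ∈ centralizerAddSubgroup x ∨ s ∈ centralizerAddSubgroup y ∨
      s ∈ centralizerAddSubgroup z := by
    intro s
    by_cases hs : s ∈ rCenter R
    · exact Or.inl (hs x)
    · have hs1 : rCentralizer s ∈ Cent R \ {Set.univ} := by
        refine ⟨⟨s, rfl⟩, fun hu => hs ?_⟩
        rw [Set.mem_singleton_iff] at hu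
        intro r
        have : r ∈ rCentralizer s := hu ▸ Set.mem_univ r
        exact (this : s * r = r * s).symm
      rw [hTe] at hs1
      have hself : s ∈ rCentralizer s := rfl
      rcases hs1 with h | h | h
      · left; show x * s = s * x; have := h ▸ hself; rw [← hxC] at this; exact this
      · right; left; show y * s = s * y; have := h ▸ hself; rw [← hyC] at this; exact this
      · right; right; show z * s = s * z; have := h ▸ hself; rw [← hzC] at this; exact this
  have hproper : ∀ r : R, r ∉ rCenter R → centralizerAddSubgroup r ≠ ⊤ := by
    intro r hr htop
    apply hr
    intro t
    have : t ∈ centralizerAddSubgroup r := htop ▸ AddSubgroup.mem_top t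
    exact (this : r * t = t * r).symm
  exact ⟨x, hxZ, index_eq_two_of_cover (hproper x hxZ) (hproper y hyZ) (hproper z hzZ) cov⟩
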